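/- Let A = TrivSqZeroExt ℤ ℤ (the superring ℤ[ε] with ε odd and ε² = 0; A is a commutative ring), and write inl a + inr b for the element a + bε. For every prime p : ℤ one has (inl p + inr 1) * (inl p - inr 1) = (inl p) ^ 2 and (inl p + inr p) * (inl p - inr p) = (inl p) ^ 2, yet ¬ Associated (inl p + inr 1) (inl p + inr p) and ¬ Associated (inl p + inr 1) (inl p - inr p). Hence p² admits two factorizations into irreducibles whose factors are not associates, so ℤ[ε] is not a unique factorization superring. (Remark 3.8 of the paper.) -/
import Mathlib


open TrivSqZeroExt

lemma zEps_aux (p s : ℤ) (hp : Prime p)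
    (h : Associated (inl p + inr 1 : TrivSqZeroExt ℤ ℤ) (inl p + inr s))
    (hs : s = p ∨ s = -p) : False := by
  obtain ⟨u, hu⟩ := h
  have h1 : (p : ℤ) * (u : TrivSqZeroExt ℤ ℤ).fst = p := by
    have := congrArg TrivSqZeroExt.fst hu
    simpa [mul_comm] using this
  have h2 : (u : TrivSqZeroExt ℤ ℤ).fst + p * (u : TrivSqZeroExt ℤ ℤ).snd = s := by
    have := congrArg TrivSqZeroExt.snd hu
    simpa [smul_eq_mul, mul_comm] using this
  have hp0 : p ≠ 0 := hp.ne_zero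
  have hf : (u : TrivSqZeroExt ℤ ℤ).fst = 1 := by
    have := mul_left_cancel₀ hp0 (by linarith [h1] : p * (u : TrivSqZeroExt ℤ ℤ).fst = p * 1)
    simpa using this
  rw [hf] at h2
  have hdvd : p ∣ 1 := by
    rcases hs with rfl | rfl
    · exact ⟨1 - (u : TrivSqZeroExt ℤ ℤ).snd, by linarith⟩
    · exact ⟨-1 - (u : TrivSqZeroExt ℤ ℤ).snd, by ring_nf; linarith⟩
  exact hp.not_unit (isUnit_of_dvd_one hdvd)

/-- **Remark 3.8**: in `ℤ[ε] = TrivSqZeroExt ℤ ℤ`, for every prime `p` the element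
`p²` factors as `(p + ε)(p - ε)` and as `(p + pε)(p - pε)`, yet the factors are not
associates; hence `ℤ[ε]` is not a unique factorization superring. -/
theorem zEps_not_ufsr (p : ℤ) (hp : Prime p) :
    (inl p + inr 1 : TrivSqZeroExt ℤ ℤ) * (inl p - inr 1) = (inl p) ^ 2 ∧
    (inl p + inr p : TrivSqZeroExt ℤ ℤ) * (inl p - inr p) = (inl p) ^ 2 ∧
    ¬ Associated (inl p + inr 1 : TrivSqZeroExt ℤ ℤ) (inl p + inr p) ∧
    ¬ Associated (inl p + inr 1 : TrivSqZeroExt ℤ ℤ) (inl p - inr p) := by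
  refine ⟨?_, ?_, ?_, ?_⟩
  · ext <;> simp [smul_eq_mul, mul_comm, sq]
  · ext <;> simp [smul_eq_mul, mul_comm, sq]
  · exact fun h => zEps_aux p p hp h (Or.inl rfl)
  · intro h
    rw [show (inl p - inr p : TrivSqZeroExt ℤ ℤ) = inl p + inr (-p) by
      rw [inr_neg]; ring] at h
    exact zEps_aux p (-p) hp h (Or.inr rfl)
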